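/- With the fiber kernel construction, the pushforward of the mixture measure μ under the coordinatewise map π = (…, F⁻¹, F⁻¹, …) equals ν: π_*μ = ν. -/

import Mathlib

open MeasureTheory Set Filter Topology ENNReal

/-- A generalized inverse of a CDF of a probability measure on ℝ is measurable. -/
lemma finv_measurable (m : Measure ℝ) [IsProbabilityMeasure m]
    (F : ℝ → ℝ) (hF : ∀ t, F t = (m (Set.Iic t)).toReal)
    (Finv : ℝ → ℝ) (hFinv : ∀ s, Finv s = sInf {t : ℝ | s ≤ F t}) :
    Measurable Finv := by
  have hFmono : Monotone F := by
    intro a b hab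
    rw [hF a, hF b]
    exact ENNReal.toReal_mono (measure_ne_top m _) (measure_mono (Iic_subset_Iic.2 hab))
  have hF01 : ∀ t, 0 ≤ F t ∧ F t ≤ 1 := by
    intro t
    rw [hF t]
    refine ⟨ENNReal.toReal_nonneg, ?_⟩
    have : m (Set.Iic t) ≤ 1 := prob_le_one
    simpa using ENNReal.toReal_mono (by simp) this
  -- F tends to 1 at +∞
  have htop : Tendsto F atTop (𝓝 1) := by
    have h1 : Tendsto (fun t => m (Set.Iic t)) atTop (𝓝 (m Set.univ)) :=
      tendsto_measure_Iic_atTop m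
    have h2 : Tendsto (fun t => (m (Set.Iic t)).toReal) atTop (𝓝 ((m Set.univ)).toReal) :=
      (ENNReal.tendsto_toReal (measure_ne_top m _)).comp h1
    have hFe : F = fun t => (m (Set.Iic t)).toReal := funext hF
    rw [hFe]
    simpa [measure_univ] using h2
  -- F tends to 0 at -∞
  have hbot : Tendsto F atBot (𝓝 0) := by
    have h1 : Tendsto (fun t => m (Set.Iic t)) atBot (𝓝 (m (⋂ t : ℝ, Set.Iic t))) :=
      tendsto_measure_iInter_atBot (fun t => (measurableSet_Iic).nullMeasurableSet)
        (fun a b hab => Iic_subset_Iic.2 hab) ⟨0, measure_ne_top m _⟩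
    have hempty : (⋂ t : ℝ, Set.Iic t) = (∅ : Set ℝ) := by
      ext x; simp only [mem_iInter, mem_Iic, mem_empty_iff_false, iff_false, not_forall]
      exact ⟨x - 1, by linarith⟩
    rw [hempty] at h1
    have h2 : Tendsto (fun t => (m (Set.Iic t)).toReal) atBot (𝓝 (0 : ℝ)) := by
      have := (ENNReal.tendsto_toReal (show (0:ℝ≥0∞) ≠ ⊤ from by simp)).comp (by simpa using h1)
      exact this
    have hFe : F = fun t => (m (Set.Iic t)).toReal := funext hF
    rw [hFe]
    exact h2
  -- monotone on (0,1)
  have hmonoOn : MonotoneOn Finv (Ioo (0:ℝ) 1) := by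
    intro s hs s' hs' hss'
    rw [hFinv s, hFinv s']
    have hbdd : BddBelow {t : ℝ | s ≤ F t} := by
      obtain ⟨t₀, ht₀⟩ : ∃ t₀, F t₀ < s := by
        have := hbot.eventually (eventually_lt_nhds hs.1)
        exact this.exists
      refine ⟨t₀, fun t ht => ?_⟩
      by_contra h
      push_neg at h
      exact absurd (le_trans ht.out (hFmono h.le)) (not_le.2 ht₀)
    have hne : {t : ℝ | s' ≤ F t}.Nonempty := by
      obtain ⟨t, ht⟩ : ∃ t, s' < F t := (htop.eventually (eventually_gt_nhds hs'.2)).exists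
      exact ⟨t, ht.le⟩
    exact csInf_le_csInf hbdd hne (fun t ht => le_trans hss' ht)
  -- Finv = 0 on Iic 0
  have hzero_le : ∀ s : ℝ, s ≤ 0 → Finv s = 0 := by
    intro s hs
    rw [hFinv s]
    have : {t : ℝ | s ≤ F t} = Set.univ := eq_univ_of_forall fun t => le_trans hs (hF01 t).1
    rw [this]
    exact Real.sInf_of_not_bddBelow (by simpa [bddBelow_def] using not_bddBelow_univ (α := ℝ))
  -- Finv = 0 on Ioi 1
  have hzero_gt : ∀ s : ℝ, 1 < s → Finv s = 0 := by
    intro s hs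
    rw [hFinv s]
    have : {t : ℝ | s ≤ F t} = ∅ := by
      ext t; simp only [mem_setOf_eq, mem_empty_iff_false, iff_false, not_le]
      exact lt_of_le_of_lt (hF01 t).2 hs
    rw [this]
    exact Real.sInf_empty
  -- preimage of Iio a is measurable
  refine measurable_of_Iio fun a => ?_
  have hdecomp : Finv ⁻¹' (Iio a) =
      ({s : ℝ | s ∈ Ioo (0:ℝ) 1 ∧ Finv s < a}) ∪
      (if (0:ℝ) < a then Iic (0:ℝ) ∪ Ioi (1:ℝ) else ∅) ∪
      (if Finv 1 < a then {(1:ℝ)} else ∅) := by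
    ext s
    simp only [mem_preimage, mem_Iio, mem_union, mem_setOf_eq]
    constructor
    · intro h
      rcases lt_trichotomy s 1 with h1 | h1 | h1
      · rcases le_or_gt s 0 with h0 | h0
        · left; right
          rw [hzero_le s h0] at h
          simp only [if_pos h, mem_union]
          exact Or.inl (mem_Iic.2 h0)
        · left; left; exact ⟨⟨h0, h1⟩, h⟩
      · right; subst h1; simp [h]
      · left; right
        rw [hzero_gt s h1] at h
        simp only [if_pos h, mem_union]
        exact Or.inr (mem_Ioi.2 h1)
    · rintro ((⟨_, h⟩ | h) | h)
      · exact h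
      · split_ifs at h with h0
        · rcases h with h | h
          · rw [hzero_le s h]; exact h0
          · rw [hzero_gt s h]; exact h0
        · exact absurd h (notMem_empty s)
      · split_ifs at h with h1
        · rw [mem_singleton_iff] at h; subst h; exact h1
        · exact absurd h (notMem_empty s)
  rw [hdecomp]
  refine MeasurableSet.union (MeasurableSet.union ?_ ?_) ?_
  · have : OrdConnected {s : ℝ | s ∈ Ioo (0:ℝ) 1 ∧ Finv s < a} := by
      refine ⟨fun x hx z hz y hy => ?_⟩
      have hyI : y ∈ Ioo (0:ℝ) 1 := ⟨lt_of_lt_of_le hx.1.1 hy.1, lt_of_le_of_lt hy.2 hz.1.2⟩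
      exact ⟨hyI, lt_of_le_of_lt (hmonoOn hyI hz.1 hy.2) hz.2⟩
    exact this.measurableSet
  · split_ifs
    · exact measurableSet_Iic.union measurableSet_Ioi
    · exact MeasurableSet.empty
  · split_ifs
    · exact measurableSet_singleton 1
    · exact MeasurableSet.empty

/-- With the fiber-kernel construction (each `μ_ω` is a probability measure supported on
the fiber `π⁻¹{ω}` of the coordinatewise generalized-inverse map
`π = (…, F⁻¹, F⁻¹, …)`), the pushforward of the mixture measure `μ = ∫ μ_ω dν(ω)`
under `π` equals `ν`. -/
theorem mixture_pushforward_eq_base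
    (ν : Measure (ℤ → ℝ)) [IsProbabilityMeasure ν]
    (F : ℝ → ℝ) (hF : ∀ t, F t = ((ν.map (fun x => x 0)) (Set.Iic t)).toReal)
    (Finv : ℝ → ℝ) (hFinv : ∀ s, Finv s = sInf {t : ℝ | s ≤ F t})
    (π : (ℤ → ℝ) → (ℤ → ℝ)) (hπ : ∀ y n, π y n = Finv (y n))
    (κ : (ℤ → ℝ) → Measure (ℤ → ℝ))
    (hprob : ∀ ω, IsProbabilityMeasure (κ ω))
    (hmeas : ∀ s : Set (ℤ → ℝ), MeasurableSet s → Measurable (fun ω => κ ω s))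
    (hfiber : ∀ ω, κ ω (π ⁻¹' {ω}) = 1) :
    (ν.bind κ).map π = ν := by
  have hm : IsProbabilityMeasure (ν.map (fun x : ℤ → ℝ => x 0)) :=
    Measure.isProbabilityMeasure_map (measurable_pi_apply 0).aemeasurable
  have hFinvMeas : Measurable Finv := finv_measurable (ν.map (fun x => x 0)) F hF Finv hFinv
  have hπMeas : Measurable π := by
    have : π = fun y n => Finv (y n) := by funext y n; exact hπ y n
    rw [this]
    exact measurable_pi_lambda _ fun n => hFinvMeas.comp (measurable_pi_apply n)
  have hκMeas : Measurable κ := Measure.measurable_of_measurable_coe κ hmeas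
  ext s hs
  rw [Measure.map_apply hπMeas hs, Measure.bind_apply (hπMeas hs) hκMeas.aemeasurable]
  have hpt : ∀ ω, κ ω (π ⁻¹' s) = s.indicator (fun _ => (1 : ℝ≥0∞)) ω := by
    intro ω
    have := hprob ω
    by_cases hω : ω ∈ s
    · have h1 : (1 : ℝ≥0∞) ≤ κ ω (π ⁻¹' s) := by
        rw [← hfiber ω]
        exact measure_mono (preimage_mono (singleton_subset_iff.2 hω))
      have h2 : κ ω (π ⁻¹' s) ≤ 1 := prob_le_one
      simp [hω, le_antisymm h2 h1]
    · have hsub : π ⁻¹' s ⊆ (π ⁻¹' {ω})ᶜ := by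
        intro x hx hx'
        exact hω (by simpa [mem_preimage, mem_singleton_iff.1 hx'] using hx)
      have hcompl : κ ω ((π ⁻¹' {ω})ᶜ) = 0 := by
        rw [measure_compl (hπMeas (measurableSet_singleton ω)) (measure_ne_top _ _),
          hfiber ω, measure_univ, tsub_self]
      have := le_trans (measure_mono hsub) hcompl.le
      simp [hω, le_antisymm this bot_le]
  calc ∫⁻ ω, κ ω (π ⁻¹' s) ∂ν = ∫⁻ ω, s.indicator (fun _ => (1 : ℝ≥0∞)) ω ∂ν :=
        lintegral_congr hpt
    _ = ν s := lintegral_indicator_one hs
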